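/- arXiv:2212.10195 — 6 statements merged into one kernel-verified Lean document; each statement's English description precedes it below -/
import Mathlib

section
/- For every quaternion q there exists a unique complex number λ with nonnegative imaginary part such that q is similar to λ (i.e., there exists a nonzero quaternion h with q = h⁻¹ λ h). -/
open Quaternion Matrix

noncomputable section

/-- The copy of a complex number inside the quaternions (span of 1 and i). -/
def toQ (z : ℂ) : ℍ[ℝ] := ⟨z.re, z.im, 0, 0⟩

/-- First complex component of a quaternion: a = c1 a + (c2 a)·j. -/
def c1 (a : ℍ[ℝ]) : ℂ := ⟨a.re, a.imI⟩
/-- Second complex component of a quaternion. -/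
def c2 (a : ℍ[ℝ]) : ℂ := ⟨a.imJ, a.imK⟩

/-- Similarity of quaternions: p = h⁻¹ q h for some nonzero h. -/
def qSimilar (p q : ℍ[ℝ]) : Prop := ∃ h : ℍ[ℝ], h ≠ 0 ∧ p = h⁻¹ * q * h

/-- q is a right eigenvalue of A. -/
def RightEig {n : ℕ} (A : Matrix (Fin n) (Fin n) ℍ[ℝ]) (q : ℍ[ℝ]) : Prop :=
  ∃ x : Fin n → ℍ[ℝ], x ≠ 0 ∧ A.mulVec x = fun i => x i * q

/-- The complex adjoint matrix of a quaternion matrix. -/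
def fAdj {n : ℕ} (A : Matrix (Fin n) (Fin n) ℍ[ℝ]) :
    Matrix (Fin n ⊕ Fin n) (Fin n ⊕ Fin n) ℂ :=
  Matrix.fromBlocks (A.map c1) (A.map c2)
    (-(A.map (fun a => starRingEnd ℂ (c2 a)))) (A.map (fun a => starRingEnd ℂ (c1 a)))

/-- Algebraic multiplicity of an eigenvalue of a complex matrix. -/
def algMult {m : Type*} [Fintype m] [DecidableEq m] (B : Matrix m m ℂ) (μ : ℂ) : ℕ :=
  (Matrix.charpoly B).rootMultiplicity μ

/-- Geometric multiplicity of an eigenvalue of a complex matrix. -/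
def geoMult {m : Type*} [Fintype m] [DecidableEq m] (B : Matrix m m ℂ) (μ : ℂ) : ℕ :=
  Module.finrank ℂ (LinearMap.ker (Matrix.mulVecLin (B - μ • 1)))

/-- The set of right q-eigenvectors (with 0). -/
def eigSet {n : ℕ} (A : Matrix (Fin n) (Fin n) ℍ[ℝ]) (q : ℍ[ℝ]) : Set (Fin n → ℍ[ℝ]) :=
  {x | A.mulVec x = fun i => x i * q}


/-- The [q]-eigenspace as a right ℍ-subspace of ℍⁿ. -/
def Vclass {n : ℕ} (A : Matrix (Fin n) (Fin n) ℍ[ℝ]) (q : ℍ[ℝ]) :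
    Submodule ℍ[ℝ]ᵐᵒᵖ (Fin n → ℍ[ℝ]) :=
  Submodule.span ℍ[ℝ]ᵐᵒᵖ (⋃ q' ∈ {p | qSimilar p q}, eigSet A q')

/-- geometric multiplicity -/
def gm {n : ℕ} (A : Matrix (Fin n) (Fin n) ℍ[ℝ]) (q : ℍ[ℝ]) : ℕ :=
  Module.finrank ℍ[ℝ]ᵐᵒᵖ (Vclass A q)


lemma mul_re_comm (a b : ℍ[ℝ]) : (a * b).re = (b * a).re := by
  simp only [Quaternion.re_mul]; ring

lemma similar_re {p q : ℍ[ℝ]} (h : qSimilar p q) : p.re = q.re := by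
  obtain ⟨h, hh, rfl⟩ := h
  rw [mul_re_comm (h⁻¹ * q) h, ← mul_assoc, mul_inv_cancel₀ hh, one_mul]

lemma similar_normSq {p q : ℍ[ℝ]} (h : qSimilar p q) :
    Quaternion.normSq p = Quaternion.normSq q := by
  obtain ⟨h, hh, rfl⟩ := h
  have hn : Quaternion.normSq h ≠ 0 := by
    simpa [Quaternion.normSq_eq_zero] using hh
  rw [_root_.map_mul, _root_.map_mul, map_inv₀]
  field_simp

lemma conj_of (h q p : ℍ[ℝ]) (hh : h ≠ 0) (he : h * q = p * h) :
    q = h⁻¹ * p * h := by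
  rw [mul_assoc, ← he, ← mul_assoc, inv_mul_cancel₀ hh, one_mul]

/-- Every quaternion is similar to a unique complex number with nonnegative imaginary part. -/
theorem exists_unique_complex_representative (q : ℍ[ℝ]) :
    ∃! l : ℂ, 0 ≤ l.im ∧ qSimilar q (toQ l) := by
  set s : ℝ := Real.sqrt (q.imI ^ 2 + q.imJ ^ 2 + q.imK ^ 2) with hs
  have hs0 : 0 ≤ s := Real.sqrt_nonneg _
  have hs2 : s ^ 2 = q.imI ^ 2 + q.imJ ^ 2 + q.imK ^ 2 :=
    Real.sq_sqrt (by positivity)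
  refine ⟨⟨q.re, s⟩, ⟨hs0, ?_⟩, ?_⟩
  · -- existence
    by_cases hz : (⟨0, q.imI + s, q.imJ, q.imK⟩ : ℍ[ℝ]) = 0
    · have ha : q.imI = -s := by
        have := congrArg QuaternionAlgebra.imI hz; simp at this; linarith
      have hb : q.imJ = 0 := by
        have := congrArg QuaternionAlgebra.imJ hz; simpa using this
      have hc : q.imK = 0 := by
        have := congrArg QuaternionAlgebra.imK hz; simpa using this
      refine ⟨⟨0, 0, 1, 0⟩, ?_, conj_of _ _ _ ?_ ?_⟩
      · intro h0
        have := congrArg QuaternionAlgebra.imJ h0; simp at this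
      · intro h0
        have := congrArg QuaternionAlgebra.imJ h0; simp at this
      · ext
        · erw [Quaternion.re_mul, Quaternion.re_mul]; simp [toQ, ha, hb, hc]
        · erw [Quaternion.imI_mul, Quaternion.imI_mul]; simp [toQ, ha, hb, hc]
        · erw [Quaternion.imJ_mul, Quaternion.imJ_mul]; simp [toQ, ha, hb, hc]
        · erw [Quaternion.imK_mul, Quaternion.imK_mul]; simp [toQ, ha, hb, hc]
    · refine ⟨⟨0, q.imI + s, q.imJ, q.imK⟩, hz, conj_of _ _ _ hz ?_⟩
      ext
      · erw [Quaternion.re_mul, Quaternion.re_mul]; dsimp only [toQ]; nlinarith [hs2]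
      · erw [Quaternion.imI_mul, Quaternion.imI_mul]; dsimp only [toQ]; nlinarith [hs2]
      · erw [Quaternion.imJ_mul, Quaternion.imJ_mul]; dsimp only [toQ]; nlinarith [hs2]
      · erw [Quaternion.imK_mul, Quaternion.imK_mul]; dsimp only [toQ]; nlinarith [hs2]
  · -- uniqueness
    rintro l' ⟨him, hsim⟩
    have h1 : q.re = l'.re := by
      have := similar_re hsim; simpa [toQ] using this
    have h2 : Quaternion.normSq q = l'.re ^ 2 + l'.im ^ 2 := by
      have := similar_normSq hsim
      rw [Quaternion.normSq_def', Quaternion.normSq_def'] at this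
      simpa [toQ, sq, Quaternion.normSq_def'] using this
    have h3 : Quaternion.normSq q = q.re ^ 2 + s ^ 2 := by
      rw [Quaternion.normSq_def', hs2]; ring
    have him2 : l'.im ^ 2 = s ^ 2 := by
      rw [h2, h1] at h3; linarith
    have : l'.im = s := by nlinarith
    exact Complex.ext h1.symm this
end
end

section
/- A complex number λ is an eigenvalue of the complex adjoint matrix f(A) if and only if λ (viewed as a quaternion) is similar to some right eigenvalue q of A. In other words, Spec(f(A)) = {λ ∈ ℂ : [λ] = [q] for some q ∈ σ_r(A)}. -/
open Quaternion Matrix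

noncomputable section

namespace specAux

lemma c1_mul (a b : ℍ[ℝ]) : c1 (a*b) = c1 a * c1 b - c2 a * (starRingEnd ℂ) (c2 b) := by
  apply Complex.ext <;>
  simp [c1, c2, Quaternion.re_mul, Quaternion.imI_mul, Complex.mul_re, Complex.mul_im] <;> ring

lemma c2_mul (a b : ℍ[ℝ]) : c2 (a*b) = c1 a * c2 b + c2 a * (starRingEnd ℂ) (c1 b) := by
  apply Complex.ext <;>
  simp [c1, c2, Quaternion.imJ_mul, Quaternion.imK_mul, Complex.mul_re, Complex.mul_im] <;> ring

lemma quat_ext {a b : ℍ[ℝ]} (h1 : c1 a = c1 b) (h2 : c2 a = c2 b) : a = b := by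
  ext <;> simp [c1, c2, Complex.ext_iff] at h1 h2 <;> tauto

def c1Hom : ℍ[ℝ] →+ ℂ where
  toFun := c1
  map_zero' := by simp [c1]; rfl
  map_add' a b := by apply Complex.ext <;> simp [c1]

def c2Hom : ℍ[ℝ] →+ ℂ where
  toFun := c2
  map_zero' := by simp [c2]; rfl
  map_add' a b := by apply Complex.ext <;> simp [c2]

lemma c1_sum {ι : Type*} (s : Finset ι) (f : ι → ℍ[ℝ]) :
    c1 (∑ i ∈ s, f i) = ∑ i ∈ s, c1 (f i) := map_sum c1Hom f s

lemma c2_sum {ι : Type*} (s : Finset ι) (f : ι → ℍ[ℝ]) :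
    c2 (∑ i ∈ s, f i) = ∑ i ∈ s, c2 (f i) := map_sum c2Hom f s

lemma c1_toQ (z : ℂ) : c1 (toQ z) = z := rfl
lemma c2_toQ (z : ℂ) : c2 (toQ z) = 0 := rfl

/-- rebuild a quaternion from its two complex components -/
def mk (z w : ℂ) : ℍ[ℝ] := ⟨z.re, z.im, w.re, w.im⟩
lemma c1_mk (z w : ℂ) : c1 (mk z w) = z := rfl
lemma c2_mk (z w : ℂ) : c2 (mk z w) = w := rfl

/-- the complex vector associated to a quaternion vector -/
def cv {n : ℕ} (x : Fin n → ℍ[ℝ]) : (Fin n ⊕ Fin n) → ℂ :=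
  Sum.elim (fun i => c1 (x i)) (fun i => -(starRingEnd ℂ) (c2 (x i)))

lemma cv_eq_zero {n : ℕ} (x : Fin n → ℍ[ℝ]) : cv x = 0 ↔ x = 0 := by
  constructor
  · intro h
    funext i
    have h1 : cv x (Sum.inl i) = 0 := by rw [h]; rfl
    have h2 : cv x (Sum.inr i) = 0 := by rw [h]; rfl
    simp [cv] at h1 h2
    exact quat_ext (b := 0) (by have : c1 (0:ℍ[ℝ]) = 0 := rfl; simpa [c1_mk, this] using h1)
      (by have : c2 (0:ℍ[ℝ]) = 0 := rfl; simpa [this] using h2)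
  · intro h; subst h; funext j; cases j <;> simp [cv] <;> rfl

lemma core {n : ℕ} (A : Matrix (Fin n) (Fin n) ℍ[ℝ]) (x : Fin n → ℍ[ℝ]) (l : ℂ) :
    (fAdj A).mulVec (cv x) = l • (cv x) ↔ A.mulVec x = fun i => x i * toQ l := by
  have key1 : ∀ i, (fAdj A).mulVec (cv x) (Sum.inl i) = c1 (A.mulVec x i) := by
    intro i
    simp only [Matrix.mulVec, dotProduct, fAdj, Fintype.sum_sum_type, cv, Sum.elim_inl,
      Sum.elim_inr, Matrix.fromBlocks_apply₁₁, Matrix.fromBlocks_apply₁₂, Matrix.map_apply,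
      c1_sum, c1_mul]
    rw [← Finset.sum_add_distrib]
    congr 1; funext j; ring
  have key2 : ∀ i, (fAdj A).mulVec (cv x) (Sum.inr i) = -(starRingEnd ℂ) (c2 (A.mulVec x i)) := by
    intro i
    simp only [Matrix.mulVec, dotProduct, fAdj, Fintype.sum_sum_type, cv, Sum.elim_inl,
      Sum.elim_inr, Matrix.fromBlocks_apply₂₁, Matrix.fromBlocks_apply₂₂, Matrix.map_apply,
      c2_sum, c2_mul, map_sum, map_add, _root_.map_mul, Matrix.neg_apply, Complex.conj_conj]
    rw [← Finset.sum_add_distrib, ← Finset.sum_neg_distrib]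
    exact Finset.sum_congr rfl fun j _ => by ring
  have keyr1 : ∀ i, (l • cv x) (Sum.inl i) = c1 (x i * toQ l) := by
    intro i
    simp [cv, c1_mul, c1_toQ, c2_toQ, mul_comm]
  have keyr2 : ∀ i, (l • cv x) (Sum.inr i) = -(starRingEnd ℂ) (c2 (x i * toQ l)) := by
    intro i
    simp [cv, c2_mul, c1_toQ, c2_toQ]
    ring
  constructor
  · intro h
    funext i
    apply quat_ext
    · have := congrFun h (Sum.inl i); rw [key1, keyr1] at this; exact this
    · have := congrFun h (Sum.inr i); rw [key2, keyr2] at this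
      have := neg_injective this
      exact (starRingEnd ℂ).injective this
  · intro h
    funext j
    cases j with
    | inl i => rw [key1, keyr1, h]
    | inr i => rw [key2, keyr2, h]

end specAux


/-- Spec(f(A)) = { λ ∈ ℂ : [λ] = [q] for some right eigenvalue q of A }. -/
theorem spec_fAdj_eq_similarity_classes {n : ℕ} (A : Matrix (Fin n) (Fin n) ℍ[ℝ]) :
    ∀ l : ℂ, (∃ v : (Fin n ⊕ Fin n) → ℂ, v ≠ 0 ∧ (fAdj A).mulVec v = l • v) ↔
      ∃ q : ℍ[ℝ], RightEig A q ∧ qSimilar (toQ l) q := by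
  intro l
  constructor
  · rintro ⟨v, hv0, hv⟩
    set x : Fin n → ℍ[ℝ] := fun i => specAux.mk (v (Sum.inl i)) (-(starRingEnd ℂ) (v (Sum.inr i))) with hxdef
    have hcv : specAux.cv x = v := by
      funext j
      cases j with
      | inl i => simp [specAux.cv, x, specAux.c1_mk]
      | inr i => simp [specAux.cv, x, specAux.c2_mk]
    refine ⟨toQ l, ⟨x, ?_, ?_⟩, 1, one_ne_zero, by simp⟩
    · intro h
      apply hv0
      rw [← hcv, (specAux.cv_eq_zero x).2 h]
    · exact (specAux.core A x l).1 (by rw [hcv]; exact hv)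
  · rintro ⟨q, ⟨x, hx0, hx⟩, h, hh, hl⟩
    set y : Fin n → ℍ[ℝ] := fun i => x i * h with hydef
    have hy0 : y ≠ 0 := by
      intro hy
      apply hx0
      funext i
      have : y i = 0 := by rw [hy]; rfl
      rcases mul_eq_zero.1 this with h1 | h1
      · exact h1
      · exact absurd h1 hh
    have hyeig : A.mulVec y = fun i => y i * toQ l := by
      funext i
      have : A.mulVec y i = (A.mulVec x i) * h := by
        simp only [Matrix.mulVec, dotProduct, y, Finset.sum_mul, mul_assoc]
      rw [this, congrFun hx i, hl]
      simp only [y]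
      rw [mul_assoc (x i) h, ← mul_assoc h, ← mul_assoc h, mul_inv_cancel₀ hh, one_mul,
        ← mul_assoc]
    refine ⟨specAux.cv y, ?_, (specAux.core A y l).2 hyeig⟩
    intro hcv
    exact hy0 ((specAux.cv_eq_zero y).1 hcv)
end
end

section
/- If A ∈ ℍ^{n×n} is Hermitian (A = A*), then every right eigenvalue of A is real, and the spectrum of the complex adjoint matrix f(A) equals the right spectrum of A. -/
open Quaternion Matrix

noncomputable section

/-! ### Auxiliary lemmas -/

def mkQ (z w : ℂ) : ℍ[ℝ] := ⟨z.re, z.im, w.re, w.im⟩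

@[simp] lemma c1_mkQ (z w : ℂ) : c1 (mkQ z w) = z := Complex.ext rfl rfl
@[simp] lemma c2_mkQ (z w : ℂ) : c2 (mkQ z w) = w := Complex.ext rfl rfl

lemma qext {a b : ℍ[ℝ]} (h1 : c1 a = c1 b) (h2 : c2 a = c2 b) : a = b := by
  have e1 := congrArg Complex.re h1; have e2 := congrArg Complex.im h1
  have e3 := congrArg Complex.re h2; have e4 := congrArg Complex.im h2
  exact QuaternionAlgebra.ext e1 e2 e3 e4

lemma c1_mul (a b : ℍ[ℝ]) : c1 (a * b) = c1 a * c1 b - c2 a * star (c2 b) := by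
  apply Complex.ext <;>
    simp [c1, c2, Complex.mul_re, Complex.mul_im] <;> ring

lemma c2_mul (a b : ℍ[ℝ]) : c2 (a * b) = c1 a * c2 b + c2 a * star (c1 b) := by
  apply Complex.ext <;>
    simp [c1, c2, Complex.mul_re, Complex.mul_im] <;> ring

@[simp] lemma c1_zero : c1 0 = 0 := Complex.ext rfl rfl
@[simp] lemma c2_zero : c2 0 = 0 := Complex.ext rfl rfl
@[simp] lemma c1_toQ (l : ℂ) : c1 (toQ l) = l := Complex.ext rfl rfl
@[simp] lemma c2_toQ (l : ℂ) : c2 (toQ l) = 0 := Complex.ext rfl rfl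

def c1h : ℍ[ℝ] →+ ℂ where
  toFun := c1
  map_zero' := Complex.ext rfl rfl
  map_add' _ _ := Complex.ext rfl rfl

def c2h : ℍ[ℝ] →+ ℂ where
  toFun := c2
  map_zero' := Complex.ext rfl rfl
  map_add' _ _ := Complex.ext rfl rfl

def vOf {n : ℕ} (x : Fin n → ℍ[ℝ]) : Fin n ⊕ Fin n → ℂ :=
  Sum.elim (fun i => c1 (x i)) (fun i => -star (c2 (x i)))

lemma vOf_mulVec {n : ℕ} (A : Matrix (Fin n) (Fin n) ℍ[ℝ]) (x : Fin n → ℍ[ℝ]) :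
    (fAdj A).mulVec (vOf x) = vOf (A.mulVec x) := by
  funext p
  have hc1 : ∀ i, c1 ((A.mulVec x) i)
      = ∑ j, (c1 (A i j) * c1 (x j) - c2 (A i j) * star (c2 (x j))) := by
    intro i
    show c1h (∑ j, A i j * x j) = _
    rw [map_sum]
    exact Finset.sum_congr rfl fun j _ => c1_mul _ _
  have hc2 : ∀ i, c2 ((A.mulVec x) i)
      = ∑ j, (c1 (A i j) * c2 (x j) + c2 (A i j) * star (c1 (x j))) := by
    intro i
    show c2h (∑ j, A i j * x j) = _
    rw [map_sum]
    exact Finset.sum_congr rfl fun j _ => c2_mul _ _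
  cases p with
  | inl i =>
    show ∑ q, fAdj A (Sum.inl i) q * vOf x q = c1 ((A.mulVec x) i)
    rw [Fintype.sum_sum_type, hc1]
    simp [fAdj, vOf, mul_neg, sub_eq_add_neg, Finset.sum_add_distrib, Finset.sum_neg_distrib]
  | inr i =>
    show ∑ q, fAdj A (Sum.inr i) q * vOf x q = -star (c2 ((A.mulVec x) i))
    rw [Fintype.sum_sum_type, hc2]
    simp [fAdj, vOf, star_sum, Finset.sum_add_distrib, Finset.sum_neg_distrib, mul_neg,
      star_mul', mul_comm, neg_add]

lemma vOf_smul {n : ℕ} (x : Fin n → ℍ[ℝ]) (l : ℂ) :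
    l • vOf x = vOf (fun i => x i * toQ l) := by
  funext p
  cases p with
  | inl i =>
    show l * c1 (x i) = c1 (x i * toQ l)
    rw [c1_mul]; simp [mul_comm]
  | inr i =>
    show l * (-star (c2 (x i))) = -star (c2 (x i * toQ l))
    rw [c2_mul]; simp [star_mul', mul_comm]

lemma vOf_inj {n : ℕ} {x y : Fin n → ℍ[ℝ]} (h : vOf x = vOf y) : x = y := by
  funext i
  refine qext (congrFun h (Sum.inl i)) ?_
  have := congrFun h (Sum.inr i)
  simp only [vOf, Sum.elim_inr, neg_inj] at this
  exact star_injective this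

lemma key {n : ℕ} (A : Matrix (Fin n) (Fin n) ℍ[ℝ]) (l : ℂ) (x : Fin n → ℍ[ℝ]) :
    (fAdj A).mulVec (vOf x) = l • (vOf x) ↔ A.mulVec x = fun i => x i * toQ l := by
  rw [vOf_mulVec, vOf_smul]
  exact ⟨fun h => vOf_inj h, fun h => by rw [h]⟩

lemma vOf_xOf {n : ℕ} (v : Fin n ⊕ Fin n → ℂ) :
    vOf (fun i => mkQ (v (Sum.inl i)) (-star (v (Sum.inr i)))) = v := by
  funext p
  cases p with
  | inl i => simp [vOf]
  | inr i => simp [vOf]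

lemma spec_iff {n : ℕ} (A : Matrix (Fin n) (Fin n) ℍ[ℝ]) (l : ℂ) :
    (∃ v : (Fin n ⊕ Fin n) → ℂ, v ≠ 0 ∧ (fAdj A).mulVec v = l • v) ↔
      (∃ x : Fin n → ℍ[ℝ], x ≠ 0 ∧ A.mulVec x = fun i => x i * toQ l) := by
  constructor
  · rintro ⟨v, hv, hE⟩
    refine ⟨fun i => mkQ (v (Sum.inl i)) (-star (v (Sum.inr i))), ?_, ?_⟩
    · intro h0
      apply hv
      rw [← vOf_xOf v, h0]
      funext p; cases p <;> simp [vOf]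
    · rw [← key A l, vOf_xOf]; exact hE
  · rintro ⟨x, hx, hE⟩
    refine ⟨vOf x, ?_, (key A l x).mpr hE⟩
    intro h0
    apply hx
    apply vOf_inj (y := 0)
    rw [h0]; funext p; cases p <;> simp [vOf]

lemma herm_real {n : ℕ} (A : Matrix (Fin n) (Fin n) ℍ[ℝ]) (hA : A = Aᴴ)
    (q : ℍ[ℝ]) (x : Fin n → ℍ[ℝ]) (hx : x ≠ 0)
    (hAx : A.mulVec x = fun i => x i * q) : q.im = 0 := by
  have hstar : ∀ i j, star (A i j) = A j i := by
    intro i j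
    conv_rhs => rw [hA]
    simp [Matrix.conjTranspose_apply]
  set r : ℝ := ∑ i, normSq (x i) with hr
  have hrpos : 0 < r := by
    obtain ⟨i, hi⟩ := Function.ne_iff.mp hx
    refine Finset.sum_pos' (fun j _ => normSq_nonneg) ⟨i, Finset.mem_univ i, ?_⟩
    exact lt_of_le_of_ne normSq_nonneg (fun h => hi (normSq_eq_zero.mp h.symm))
  set s : ℍ[ℝ] := ∑ i, star (x i) * (A.mulVec x) i with hs
  have h1 : s = (r : ℍ[ℝ]) * q := by
    rw [hs, hAx]
    simp only [← mul_assoc, star_mul_self, ← Finset.sum_mul]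
    congr 1
    rw [hr]
    exact (map_sum (algebraMap ℝ ℍ[ℝ]) _ _).symm
  have h2 : star s = s := by
    have expand : s = ∑ i, ∑ j, star (x i) * (A i j * x j) := by
      rw [hs]
      exact Finset.sum_congr rfl fun i _ => by
        rw [Matrix.mulVec, dotProduct, Finset.mul_sum]
    rw [expand, star_sum, Finset.sum_comm]
    refine Finset.sum_congr rfl fun i _ => ?_
    rw [star_sum]
    refine Finset.sum_congr rfl fun j _ => ?_
    rw [StarMul.star_mul, StarMul.star_mul, star_star, hstar, mul_assoc]
  have h3 : (r : ℍ[ℝ]) * q = (r : ℍ[ℝ]) * star q := by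
    conv_lhs => rw [← h1, ← h2, h1]
    rw [StarMul.star_mul, Quaternion.star_coe, Quaternion.coe_commutes]
  have hq : q = star q := mul_left_cancel₀
    (fun h => hrpos.ne' (Quaternion.coe_injective (h.trans (Quaternion.coe_zero).symm))) h3
  have e1 := congrArg QuaternionAlgebra.imI hq
  have e2 := congrArg QuaternionAlgebra.imJ hq
  have e3 := congrArg QuaternionAlgebra.imK hq
  simp only [Quaternion.imI_star, Quaternion.imJ_star, Quaternion.imK_star] at e1 e2 e3
  ext <;> simp [QuaternionAlgebra.im] <;> linarith


/-- For Hermitian A, all right eigenvalues are real and Spec(f(A)) = σ_r(A). -/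
theorem hermitian_rightSpectrum_real {n : ℕ} (A : Matrix (Fin n) (Fin n) ℍ[ℝ])
    (hA : A = Aᴴ) :
    (∀ q : ℍ[ℝ], RightEig A q → q.im = 0) ∧
      (∀ l : ℂ, (∃ v : (Fin n ⊕ Fin n) → ℂ, v ≠ 0 ∧ (fAdj A).mulVec v = l • v) ↔
        RightEig A (toQ l)) := by
  constructor
  · rintro q ⟨x, hx, hAx⟩
    exact herm_real A hA q x hx hAx
  · intro l
    exact (spec_iff A l).trans Iff.rfl
end
end

section
/- Every square quaternion matrix A ∈ ℍ^{n×n} has a right eigenvalue which is a complex number with nonnegative imaginary part. -/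
open Quaternion Matrix

noncomputable section

def mk4 (u w : ℂ) : ℍ[ℝ] := ⟨u.re, u.im, -w.re, w.im⟩
def jQ : ℍ[ℝ] := ⟨0, 0, 1, 0⟩

lemma key1 (a : ℍ[ℝ]) (u w : ℂ) :
    a * mk4 u w = mk4 (c1 a * u + c2 a * w) (-(starRingEnd ℂ) (c2 a) * u + (starRingEnd ℂ) (c1 a) * w) := by
  ext <;> simp only [Quaternion.re_mul, Quaternion.imI_mul, Quaternion.imJ_mul, Quaternion.imK_mul] <;> simp [mk4, c1, c2, Quaternion.re_mul, Quaternion.imI_mul, Quaternion.imJ_mul,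
    Quaternion.imK_mul, Complex.add_re, Complex.add_im, Complex.mul_re, Complex.mul_im] <;> ring

lemma key2 (μ u w : ℂ) :
    mk4 u w * toQ μ = mk4 (μ * u) (μ * w) := by
  ext <;> simp only [Quaternion.re_mul, Quaternion.imI_mul, Quaternion.imJ_mul, Quaternion.imK_mul] <;> simp [mk4, toQ, Quaternion.re_mul, Quaternion.imI_mul, Quaternion.imJ_mul,
    Quaternion.imK_mul, Complex.mul_re, Complex.mul_im] <;> ring

lemma key3 (μ : ℂ) : toQ μ * jQ = jQ * toQ ((starRingEnd ℂ) μ) := by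
  ext <;> simp only [Quaternion.re_mul, Quaternion.imI_mul, Quaternion.imJ_mul, Quaternion.imK_mul] <;> simp [toQ, jQ, Quaternion.re_mul, Quaternion.imI_mul, Quaternion.imJ_mul,
    Quaternion.imK_mul]

lemma jQ_ne : jQ ≠ 0 := by
  intro h
  simpa [jQ] using congrArg QuaternionAlgebra.imJ h

lemma mk4_eq_zero {u w : ℂ} : mk4 u w = 0 ↔ u = 0 ∧ w = 0 := by
  constructor
  · intro h
    have h1 := congrArg QuaternionAlgebra.re h
    have h2 := congrArg QuaternionAlgebra.imI h
    have h3 := congrArg QuaternionAlgebra.imJ h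
    have h4 := congrArg QuaternionAlgebra.imK h
    simp [mk4] at h1 h2 h3 h4
    exact ⟨Complex.ext h1 h2, Complex.ext h3 h4⟩
  · rintro ⟨hu, hw⟩
    ext <;> simp [mk4, hu, hw]

lemma sum_mk4 {ι : Type*} (s : Finset ι) (f g : ι → ℂ) :
    ∑ k ∈ s, mk4 (f k) (g k) = mk4 (∑ k ∈ s, f k) (∑ k ∈ s, g k) := by
  classical
  induction s using Finset.induction with
  | empty => ext <;> simp only [Finset.sum_empty] <;> simp [mk4]
  | insert _ _ h ih =>
    rw [Finset.sum_insert h, Finset.sum_insert h, Finset.sum_insert h, ih]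
    ext <;> simp only [Quaternion.re_add, Quaternion.imI_add, Quaternion.imJ_add, Quaternion.imK_add] <;> simp [mk4] <;> ring

/-- Every square quaternion matrix has a right eigenvalue which is a complex number
with nonnegative imaginary part. -/
theorem exists_complex_right_eigenvalue {n : ℕ} (hn : 0 < n)
    (A : Matrix (Fin n) (Fin n) ℍ[ℝ]) :
    ∃ l : ℂ, 0 ≤ l.im ∧ RightEig A (toQ l) := by
  classical
  have : Nonempty (Fin n) := ⟨⟨0, hn⟩⟩
  obtain ⟨μ, hμ⟩ := Module.End.exists_eigenvalue (Matrix.mulVecLin (fAdj A))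
  obtain ⟨v, hv⟩ := hμ.exists_hasEigenvector
  have hv0 : v ≠ 0 := hv.2
  have hBv : (fAdj A).mulVec v = μ • v := hv.apply_eq_smul
  have E1 : ∀ i, (∑ k, c1 (A i k) * v (Sum.inl k)) + (∑ k, c2 (A i k) * v (Sum.inr k))
      = μ * v (Sum.inl i) := by
    intro i
    have := congrFun hBv (Sum.inl i)
    simpa [fAdj, Matrix.mulVec, dotProduct, Fintype.sum_sum_type] using this
  have E2 : ∀ i, (∑ k, -(starRingEnd ℂ) (c2 (A i k)) * v (Sum.inl k)) +
      (∑ k, (starRingEnd ℂ) (c1 (A i k)) * v (Sum.inr k)) = μ * v (Sum.inr i) := by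
    intro i
    have := congrFun hBv (Sum.inr i)
    simpa [fAdj, Matrix.mulVec, dotProduct, Fintype.sum_sum_type] using this
  set x : Fin n → ℍ[ℝ] := fun i => mk4 (v (Sum.inl i)) (v (Sum.inr i)) with hxdef
  have hx0 : x ≠ 0 := by
    intro h
    apply hv0
    funext j
    have hx : ∀ i, mk4 (v (Sum.inl i)) (v (Sum.inr i)) = 0 := fun i => congrFun h i
    cases j with
    | inl i => exact (mk4_eq_zero.1 (hx i)).1
    | inr i => exact (mk4_eq_zero.1 (hx i)).2
  have hAx : A.mulVec x = fun i => x i * toQ μ := by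
    funext i
    show ∑ k, A i k * x k = x i * toQ μ
    calc ∑ k, A i k * x k
        = ∑ k, mk4 (c1 (A i k) * v (Sum.inl k) + c2 (A i k) * v (Sum.inr k))
            (-(starRingEnd ℂ) (c2 (A i k)) * v (Sum.inl k) +
              (starRingEnd ℂ) (c1 (A i k)) * v (Sum.inr k)) := by
          simp only [hxdef, key1]
      _ = mk4 (μ * v (Sum.inl i)) (μ * v (Sum.inr i)) := by
          rw [sum_mk4, Finset.sum_add_distrib, Finset.sum_add_distrib, E1 i, E2 i]
      _ = x i * toQ μ := (key2 _ _ _).symm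
  rcases le_or_gt 0 μ.im with him | him
  · exact ⟨μ, him, x, hx0, hAx⟩
  · refine ⟨(starRingEnd ℂ) μ, by simpa using him.le, fun i => x i * jQ, ?_, ?_⟩
    · intro h
      apply hx0
      funext i
      have := congrFun h i
      rcases mul_eq_zero.1 this with h' | h'
      · exact h'
      · exact absurd h' jQ_ne
    · funext i
      have hi : ∑ k, A i k * x k = x i * toQ μ := congrFun hAx i
      show ∑ k, A i k * (x k * jQ) = x i * jQ * toQ ((starRingEnd ℂ) μ)
      calc ∑ k, A i k * (x k * jQ) = (∑ k, A i k * x k) * jQ := by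
            rw [Finset.sum_mul]; simp [mul_assoc]
        _ = x i * toQ μ * jQ := by rw [hi]
        _ = x i * jQ * toQ ((starRingEnd ℂ) μ) := by rw [mul_assoc, key3, mul_assoc]
end
end

section
/- (Quaternionic Schur triangularization) For every A ∈ ℍ^{n×n} there exist a unitary matrix U ∈ ℍ^{n×n} (U*U = Id) and an upper triangular matrix T ∈ ℍ^{n×n} such that T = U*AU, and all diagonal entries of T are complex numbers with nonnegative imaginary part. -/
open Quaternion Matrix

noncomputable section

/-- ι a b = toQ a - j * toQ b -/
def iQ (a b : ℂ) : ℍ[ℝ] := ⟨a.re, a.im, -b.re, b.im⟩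

lemma iQ_add (a b a' b' : ℂ) : iQ (a + a') (b + b') = iQ a b + iQ a' b' := by
  ext <;> simp only [Quaternion.re_add, Quaternion.imI_add, Quaternion.imJ_add, Quaternion.imK_add] <;> simp [iQ] <;> ring

lemma iQ_eq_zero {a b : ℂ} (h : iQ a b = 0) : a = 0 ∧ b = 0 := by
  rw [Quaternion.ext_iff] at h
  simp [iQ, Complex.ext_iff] at h ⊢
  exact ⟨⟨h.1, h.2.1⟩, ⟨by linarith [h.2.2.1], h.2.2.2⟩⟩

lemma mul_iQ (q : ℍ[ℝ]) (a b : ℂ) :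
    q * iQ a b = iQ (c1 q * a + c2 q * b) (-(starRingEnd ℂ (c2 q)) * a + (starRingEnd ℂ (c1 q)) * b) := by
  ext <;> simp only [Quaternion.re_mul, Quaternion.imI_mul, Quaternion.imJ_mul, Quaternion.imK_mul] <;> simp [iQ, c1, c2, Complex.ext_iff] <;> ring

lemma iQ_mul_toQ (a b μ : ℂ) : iQ a b * toQ μ = iQ (μ * a) (μ * b) := by
  ext <;> simp only [Quaternion.re_mul, Quaternion.imI_mul, Quaternion.imJ_mul, Quaternion.imK_mul] <;> simp [iQ, toQ, Complex.ext_iff] <;> ring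

def iQHom : ℂ × ℂ →+ ℍ[ℝ] where
  toFun p := iQ p.1 p.2
  map_zero' := by simp [iQ]; rfl
  map_add' p q := iQ_add p.1 p.2 q.1 q.2

lemma exists_eig {n : ℕ} (hn : 0 < n) (A : Matrix (Fin n) (Fin n) ℍ[ℝ]) :
    ∃ (μ : ℂ) (x : Fin n → ℍ[ℝ]), 0 ≤ μ.im ∧ x ≠ 0 ∧
      A.mulVec x = fun i => x i * toQ μ := by
  haveI : NeZero n := ⟨hn.ne'⟩
  haveI : Nontrivial ((Fin n ⊕ Fin n) → ℂ) := by
    haveI : Nonempty (Fin n ⊕ Fin n) := ⟨Sum.inl ⟨0, hn⟩⟩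
    infer_instance
  obtain ⟨μ, hμ⟩ := Module.End.exists_eigenvalue (Matrix.mulVecLin (fAdj A))
  obtain ⟨v, hv⟩ := hμ.exists_hasEigenvector
  have hveq : (fAdj A).mulVec v = μ • v := by
    have := Module.End.mem_eigenspace_iff.mp hv.1
    simpa using this
  set u : Fin n → ℂ := fun i => v (Sum.inl i) with hu
  set w : Fin n → ℂ := fun i => v (Sum.inr i) with hw
  have h1 : ∀ i, ∑ j, (c1 (A i j) * u j + c2 (A i j) * w j) = μ * u i := by
    intro i
    have := congrFun hveq (Sum.inl i)
    simp [Matrix.mulVec, dotProduct, fAdj, Fintype.sum_sum_type,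
      Matrix.fromBlocks, Matrix.map] at this
    rw [Finset.sum_add_distrib]
    simpa using this
  have h2 : ∀ i, ∑ j, (-(starRingEnd ℂ (c2 (A i j))) * u j + (starRingEnd ℂ (c1 (A i j))) * w j) = μ * w i := by
    intro i
    have := congrFun hveq (Sum.inr i)
    simp [Matrix.mulVec, dotProduct, fAdj, Fintype.sum_sum_type,
      Matrix.fromBlocks, Matrix.map, neg_mul] at this
    rw [Finset.sum_add_distrib]
    simpa [neg_mul, Finset.sum_neg_distrib] using this
  set x : Fin n → ℍ[ℝ] := fun i => iQ (u i) (w i) with hx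
  have hmv : A.mulVec x = fun i => x i * toQ μ := by
    funext i
    calc (A.mulVec x) i = ∑ j, A i j * iQ (u j) (w j) := rfl
    _ = ∑ j, iQHom (c1 (A i j) * u j + c2 (A i j) * w j,
          -(starRingEnd ℂ (c2 (A i j))) * u j + (starRingEnd ℂ (c1 (A i j))) * w j) := by
          refine Finset.sum_congr rfl fun j _ => ?_
          rw [mul_iQ]; rfl
    _ = iQHom (∑ j, (c1 (A i j) * u j + c2 (A i j) * w j),
          ∑ j, (-(starRingEnd ℂ (c2 (A i j))) * u j + (starRingEnd ℂ (c1 (A i j))) * w j)) := by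
          rw [← map_sum, ← prod_mk_sum]
    _ = x i * toQ μ := by rw [h1, h2]; exact (iQ_mul_toQ _ _ _).symm
  have hx0 : x ≠ 0 := by
    intro h
    apply hv.2
    funext k
    cases k with
    | inl i => have := iQ_eq_zero (congrFun h i); exact this.1
    | inr i => have := iQ_eq_zero (congrFun h i); exact this.2
  by_cases him : 0 ≤ μ.im
  · exact ⟨μ, x, him, hx0, hmv⟩
  · set jq : ℍ[ℝ] := ⟨0, 0, 1, 0⟩ with hjq
    have hjj : ∀ q : ℍ[ℝ], q * jq = 0 → q = 0 := by
      intro q h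
      have : q * (jq * jq) = 0 := by rw [← mul_assoc, h, zero_mul]
      have hj2 : jq * jq = -1 := by ext <;> simp only [Quaternion.re_mul, Quaternion.imI_mul, Quaternion.imJ_mul, Quaternion.imK_mul] <;> simp [hjq]
      rw [hj2] at this
      simpa using this
    have hcomm : toQ μ * jq = jq * toQ (starRingEnd ℂ μ) := by
      ext <;> simp only [Quaternion.re_mul, Quaternion.imI_mul, Quaternion.imJ_mul, Quaternion.imK_mul] <;> simp [toQ, hjq]
    refine ⟨starRingEnd ℂ μ, fun i => x i * jq, by simp; linarith [lt_of_not_ge him], ?_, ?_⟩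
    · intro h
      exact hx0 (funext fun i => hjj _ (congrFun h i))
    · funext i
      have : (A.mulVec fun i => x i * jq) i = (A.mulVec x) i * jq := by
        simp [Matrix.mulVec, dotProduct, Finset.sum_mul, mul_assoc]
      rw [this, hmv]
      simp only [← mul_assoc]
      rw [mul_assoc (x i), hcomm, ← mul_assoc]

/-! ### Householder -/

def hh {m : ℕ} (v : Fin m → ℍ[ℝ]) (c : ℝ) : Matrix (Fin m) (Fin m) ℍ[ℝ] :=
  1 - Matrix.of fun i j => v i * star (v j) * (c : ℍ[ℝ])

lemma hh_herm {m : ℕ} (v : Fin m → ℍ[ℝ]) (c : ℝ) : (hh v c)ᴴ = hh v c := by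
  refine Matrix.ext fun i j => ?_
  simp only [hh, Matrix.conjTranspose_apply, Matrix.sub_apply, Matrix.one_apply,
    Matrix.of_apply, star_sub, StarMul.star_mul, star_star, Quaternion.star_coe,
    apply_ite (star : ℍ[ℝ] → ℍ[ℝ]), star_one, star_zero]
  rw [Quaternion.coe_commutes, mul_assoc]
  congr 1
  simp [eq_comm]

lemma hh_aux (a b q : ℍ[ℝ]) (c : ℝ) :
    a * star q * (c : ℍ[ℝ]) * (q * b * (c : ℍ[ℝ]))
      = a * b * ((normSq q * (c * c) : ℝ) : ℍ[ℝ]) := by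
  calc a * star q * (c : ℍ[ℝ]) * (q * b * (c : ℍ[ℝ]))
      = a * (star q * (((c : ℍ[ℝ]) * q) * b)) * (c : ℍ[ℝ]) := by simp [mul_assoc]
    _ = a * (star q * ((q * (c : ℍ[ℝ])) * b)) * (c : ℍ[ℝ]) := by
        rw [Quaternion.coe_commutes]
    _ = a * ((star q * q) * ((c : ℍ[ℝ]) * b)) * (c : ℍ[ℝ]) := by simp [mul_assoc]
    _ = a * ((((normSq q : ℝ) : ℍ[ℝ]) * (c : ℍ[ℝ])) * b) * (c : ℍ[ℝ]) := by
        rw [Quaternion.star_mul_self]; simp [mul_assoc]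
    _ = a * (((normSq q * c : ℝ) : ℍ[ℝ]) * b) * (c : ℍ[ℝ]) := by
        rw [Quaternion.coe_mul]
    _ = a * (b * ((normSq q * c : ℝ) : ℍ[ℝ])) * (c : ℍ[ℝ]) := by
        rw [Quaternion.coe_commutes]
    _ = a * b * ((normSq q * (c * c) : ℝ) : ℍ[ℝ]) := by
        rw [show (normSq q * (c * c) : ℝ) = (normSq q * c) * c by ring, Quaternion.coe_mul]
        simp [mul_assoc]

lemma coe_sum_q {m : ℕ} (f : Fin m → ℝ) : ((∑ i, f i : ℝ) : ℍ[ℝ]) = ∑ i, ((f i : ℝ) : ℍ[ℝ]) :=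
  map_sum (algebraMap ℝ ℍ[ℝ]) f Finset.univ

lemma hh_mul_self {m : ℕ} (v : Fin m → ℍ[ℝ]) (c : ℝ)
    (hc : (∑ i, normSq (v i)) * c = 2) : hh v c * hh v c = 1 := by
  set P : Matrix (Fin m) (Fin m) ℍ[ℝ] := Matrix.of fun i j => v i * star (v j) * (c : ℍ[ℝ])
    with hP
  have hPP : P * P = P + P := by
    refine Matrix.ext fun i j => ?_
    rw [Matrix.mul_apply]
    calc ∑ k, P i k * P k j
        = ∑ k, v i * star (v j) * ((normSq (v k) * (c * c) : ℝ) : ℍ[ℝ]) := by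
          refine Finset.sum_congr rfl fun k _ => ?_
          simp only [hP, Matrix.of_apply]
          exact hh_aux (v i) (star (v j)) (v k) c
      _ = v i * star (v j) * ((((∑ k, normSq (v k)) * (c * c)) : ℝ) : ℍ[ℝ]) := by
          rw [← Finset.mul_sum, ← coe_sum_q]
          congr 2
          rw [Finset.sum_mul]
      _ = (P + P) i j := by
          rw [show ((∑ k, normSq (v k)) * (c * c) : ℝ) = ((∑ k, normSq (v k)) * c) * c by ring,
            hc, Quaternion.coe_mul, show ((2:ℝ):ℍ[ℝ]) = 2 by norm_cast, two_mul,
            mul_add]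
          simp [hP, Matrix.add_apply]
  have h2 : hh v c * hh v c = 1 - P - P + P * P := by
    simp only [hh, ← hP]
    noncomm_ring
  rw [h2, hPP]
  abel

lemma unit_star_mul {s : ℍ[ℝ]} (h : star s * s = 1) : s * star s = 1 := by
  have hs0 : s ≠ 0 := by rintro rfl; simp at h
  have h2 : star s = s⁻¹ := eq_inv_of_mul_eq_one_left h
  rw [h2, mul_inv_cancel₀ hs0]

lemma diag_unitary {n : ℕ} (d : Fin n → ℍ[ℝ]) (hd : ∀ i, star (d i) * d i = 1) :
    (Matrix.diagonal d)ᴴ * Matrix.diagonal d = 1 ∧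
      Matrix.diagonal d * (Matrix.diagonal d)ᴴ = 1 := by
  rw [Matrix.diagonal_conjTranspose, Matrix.diagonal_mul_diagonal,
    Matrix.diagonal_mul_diagonal]
  constructor <;>
  · refine Matrix.ext fun i j => ?_
    by_cases h : i = j
    · subst h
      simp [Matrix.diagonal_apply_eq, Matrix.one_apply_eq, hd i, unit_star_mul (hd i)]
    · simp [Matrix.diagonal_apply_ne _ h, Matrix.one_apply_ne h]

lemma exists_unitary_col {n : ℕ} (x : Fin (n+1) → ℍ[ℝ]) (hx : ∑ i, normSq (x i) = 1) :
    ∃ U₀ : Matrix (Fin (n+1)) (Fin (n+1)) ℍ[ℝ],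
      U₀ᴴ * U₀ = 1 ∧ U₀ * U₀ᴴ = 1 ∧ ∀ i, U₀ i 0 = x i := by
  classical
  have hnormx0 : normSq (x 0) = ‖x 0‖ * ‖x 0‖ := Quaternion.normSq_eq_norm_mul_self _
  set s : ℍ[ℝ] := if x 0 = 0 then 1 else x 0 * ((‖x 0‖⁻¹ : ℝ) : ℍ[ℝ]) with hs
  have hs1 : star s * s = 1 := by
    by_cases h : x 0 = 0
    · simp [hs, h]
    · have hr : ‖x 0‖ ≠ 0 := norm_ne_zero_iff.mpr h
      simp only [hs, if_neg h]
      rw [StarMul.star_mul, Quaternion.star_coe, mul_assoc, ← mul_assoc (star (x 0)),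
        Quaternion.star_mul_self, hnormx0, Quaternion.coe_commutes, ← Quaternion.coe_mul,
        ← Quaternion.coe_mul]
      rw [show (1:ℍ[ℝ]) = ((1:ℝ):ℍ[ℝ]) by norm_cast, Quaternion.coe_inj]
      field_simp
  have hx0s : star (x 0) * s = ((‖x 0‖ : ℝ) : ℍ[ℝ]) := by
    by_cases h : x 0 = 0
    · simp [hs, h]
    · have hr : ‖x 0‖ ≠ 0 := norm_ne_zero_iff.mpr h
      simp only [hs, if_neg h]
      rw [← mul_assoc, Quaternion.star_mul_self, hnormx0, ← Quaternion.coe_mul,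
        Quaternion.coe_inj]
      field_simp
  have hsx0 : star s * x 0 = ((‖x 0‖ : ℝ) : ℍ[ℝ]) := by
    have := congrArg star hx0s
    rwa [StarMul.star_mul, star_star, Quaternion.star_coe] at this
  have hxs : x 0 = s * ((‖x 0‖ : ℝ) : ℍ[ℝ]) := by
    by_cases h : x 0 = 0
    · simp [hs, h]
    · have hr : ‖x 0‖ ≠ 0 := norm_ne_zero_iff.mpr h
      simp only [hs, if_neg h]
      rw [mul_assoc, ← Quaternion.coe_mul, inv_mul_cancel₀ hr]
      norm_cast
      rw [mul_one]
  set d : Fin (n+1) → ℍ[ℝ] := fun i => if i = 0 then s else 1 with hd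
  have hdu : ∀ i, star (d i) * d i = 1 := by
    intro i
    by_cases h : i = 0 <;> simp [hd, h, hs1]
  obtain ⟨hD1, hD2⟩ := diag_unitary d hdu
  have hsplit : normSq (x 0) + ∑ i : Fin n, normSq (x i.succ) = 1 := by
    rw [← hx, Fin.sum_univ_succ]
  have hle : ‖x 0‖ ≤ 1 := by
    have h1 : ∀ i : Fin n, 0 ≤ normSq (x i.succ) := fun i => normSq_nonneg
    have h2 : 0 ≤ ∑ i : Fin n, normSq (x i.succ) := Finset.sum_nonneg fun i _ => h1 i
    nlinarith [norm_nonneg (x 0)]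
  by_cases hone : ‖x 0‖ = 1
  · -- x = e₀ * s
    have hns : normSq (x 0) = 1 := by rw [hnormx0, hone]; ring
    have hrest : ∀ i : Fin n, x i.succ = 0 := by
      intro i
      have h2 : ∑ i : Fin n, normSq (x i.succ) = 0 := by rw [hns] at hsplit; linarith
      have := (Finset.sum_eq_zero_iff_of_nonneg
        (fun i _ => normSq_nonneg (a := x i.succ))).mp h2 i (Finset.mem_univ i)
      exact normSq_eq_zero.mp this
    have hx0eq : x 0 = s := by rw [hxs, hone]; norm_cast; simp
    refine ⟨Matrix.diagonal d, hD1, hD2, fun i => ?_⟩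
    refine Fin.cases ?_ (fun j => ?_) i
    · rw [Matrix.diagonal_apply_eq, hd]
      simp [hx0eq]
    · rw [Matrix.diagonal_apply_ne _ (Fin.succ_ne_zero j), hrest j]
  · have hlt : ‖x 0‖ < 1 := lt_of_le_of_ne hle hone
    have hden : 2 - 2*‖x 0‖ ≠ 0 := by linarith
    set v : Fin (n+1) → ℍ[ℝ] := fun i => x i - if i = 0 then s else 0 with hv
    set c : ℝ := (2 - 2*‖x 0‖)⁻¹ * 2 with hc
    have hv0 : v 0 = x 0 - s := by simp [hv]
    have hnv0 : ((normSq (v 0) : ℝ) : ℍ[ℝ]) = ((normSq (x 0) - 2*‖x 0‖ + 1 : ℝ) : ℍ[ℝ]) := by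
      rw [← Quaternion.star_mul_self, hv0, star_sub, sub_mul, mul_sub, mul_sub,
        Quaternion.star_mul_self, hx0s, hsx0, hs1]
      rw [show (normSq (x 0) - 2*‖x 0‖ + 1 : ℝ) = normSq (x 0) - ‖x 0‖ - (‖x 0‖ - 1) by ring]
      push_cast
      abel
    have hnv0' : normSq (v 0) = normSq (x 0) - 2*‖x 0‖ + 1 := Quaternion.coe_injective hnv0
    have hsum : ∑ i, normSq (v i) = 2 - 2*‖x 0‖ := by
      rw [Fin.sum_univ_succ, hnv0']
      have : ∀ i : Fin n, v i.succ = x i.succ := by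
        intro i; simp [hv, Fin.succ_ne_zero]
      rw [Finset.sum_congr rfl fun i _ => congrArg normSq (this i)]
      nlinarith [hsplit]
    have hcc : (∑ i, normSq (v i)) * c = 2 := by
      rw [hsum, hc]; field_simp
    refine ⟨hh v c * Matrix.diagonal d, ?_, ?_, fun i => ?_⟩
    · rw [Matrix.conjTranspose_mul, hh_herm, mul_assoc, ← mul_assoc (hh v c),
        hh_mul_self v c hcc, one_mul, hD1]
    · rw [Matrix.conjTranspose_mul, hh_herm, mul_assoc, ← mul_assoc (Matrix.diagonal d),
        hD2, one_mul, hh_mul_self v c hcc]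
    · rw [Matrix.mul_diagonal]
      have hd0 : d 0 = s := by simp [hd]
      rw [hd0]
      have hH : hh v c i 0 = (1 : Matrix (Fin (n+1)) (Fin (n+1)) ℍ[ℝ]) i 0
          - v i * star (v 0) * (c : ℍ[ℝ]) := by
        simp [hh, Matrix.sub_apply]
      rw [hH, sub_mul]
      have hv0s : star (v 0) * s = ((‖x 0‖ - 1 : ℝ) : ℍ[ℝ]) := by
        rw [hv0, star_sub, sub_mul, hx0s, hs1]
        push_cast
        noncomm_ring
      have key : v i * star (v 0) * (c : ℍ[ℝ]) * s = - v i := by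
        rw [mul_assoc, Quaternion.coe_commutes, ← mul_assoc, mul_assoc (v i), hv0s,
          mul_assoc, ← Quaternion.coe_mul]
        rw [show (‖x 0‖ - 1) * c = -1 by rw [hc]; field_simp; ring]
        rw [show ((-1 : ℝ) : ℍ[ℝ]) = -1 by norm_cast]
        noncomm_ring
      rw [key, sub_neg_eq_add]
      refine Fin.cases ?_ (fun j => ?_) i
      · rw [Matrix.one_apply_eq, one_mul, hv0]
        noncomm_ring
      · rw [Matrix.one_apply_ne (Fin.succ_ne_zero j), zero_mul, zero_add]
        simp [hv, Fin.succ_ne_zero]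

/-! ### Normalization -/

lemma exists_unit_eig {n : ℕ} (A : Matrix (Fin (n+1)) (Fin (n+1)) ℍ[ℝ]) :
    ∃ (μ : ℂ) (x : Fin (n+1) → ℍ[ℝ]), 0 ≤ μ.im ∧ (∑ i, normSq (x i)) = 1 ∧
      A.mulVec x = fun i => x i * toQ μ := by
  obtain ⟨μ, x, him, hx0, hmv⟩ := exists_eig (Nat.succ_pos n) A
  set N : ℝ := ∑ i, normSq (x i) with hN
  have hNpos : 0 < N := by
    obtain ⟨i, hi⟩ := Function.ne_iff.mp hx0
    refine Finset.sum_pos' (fun j _ => normSq_nonneg) ⟨i, Finset.mem_univ i, ?_⟩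
    exact lt_of_le_of_ne normSq_nonneg (Ne.symm (normSq_ne_zero.mpr hi))
  have hsq : 0 < Real.sqrt N := Real.sqrt_pos.mpr hNpos
  set r : ℝ := (Real.sqrt N)⁻¹ with hr
  refine ⟨μ, fun i => x i * ((r:ℝ) : ℍ[ℝ]), him, ?_, ?_⟩
  · have : ∀ i, normSq (x i * ((r:ℝ):ℍ[ℝ])) = normSq (x i) * (r * r) := by
      intro i
      rw [_root_.map_mul, Quaternion.normSq_coe]
      ring
    rw [Finset.sum_congr rfl fun i _ => this i, ← Finset.sum_mul, ← hN, hr]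
    rw [show N * ((Real.sqrt N)⁻¹ * (Real.sqrt N)⁻¹) = (Real.sqrt N * Real.sqrt N) * ((Real.sqrt N)⁻¹ * (Real.sqrt N)⁻¹) by
      rw [Real.mul_self_sqrt hNpos.le]]
    field_simp
  · funext i
    have h1 : (A.mulVec fun i => x i * ((r:ℝ):ℍ[ℝ])) i = (A.mulVec x) i * ((r:ℝ):ℍ[ℝ]) := by
      simp [Matrix.mulVec, dotProduct, Finset.sum_mul, mul_assoc]
    rw [h1, hmv]
    rw [mul_assoc, ← Quaternion.coe_commutes, ← mul_assoc]

/-! ### Block matrices -/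

def blk {n : ℕ} (a : ℍ[ℝ]) (r c : Fin n → ℍ[ℝ]) (M : Matrix (Fin n) (Fin n) ℍ[ℝ]) :
    Matrix (Fin (n+1)) (Fin (n+1)) ℍ[ℝ] :=
  Matrix.of (Fin.cons (Fin.cons a r) (fun i => Fin.cons (c i) (M i)))

variable {n : ℕ} {a a' : ℍ[ℝ]} {r c r' c' : Fin n → ℍ[ℝ]} {M M' : Matrix (Fin n) (Fin n) ℍ[ℝ]}

@[simp] lemma blk00 : blk a r c M 0 0 = a := by simp [blk]
@[simp] lemma blk0s (j : Fin n) : blk a r c M 0 j.succ = r j := by simp [blk]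
@[simp] lemma blks0 (i : Fin n) : blk a r c M i.succ 0 = c i := by simp [blk]
@[simp] lemma blkss (i j : Fin n) : blk a r c M i.succ j.succ = M i j := by simp [blk]

lemma blk_eq (B : Matrix (Fin (n+1)) (Fin (n+1)) ℍ[ℝ]) :
    B = blk (B 0 0) (fun j => B 0 j.succ) (fun i => B i.succ 0) (B.submatrix Fin.succ Fin.succ) := by
  refine Matrix.ext fun i j => ?_
  refine Fin.cases ?_ (fun i' => ?_) i <;> refine Fin.cases ?_ (fun j' => ?_) j <;> simp

lemma blk_mul : blk a r c M * blk a' r' c' M' =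
    blk (a * a' + ∑ k, r k * c' k) (fun j => a * r' j + ∑ k, r k * M' k j)
        (fun i => c i * a' + ∑ k, M i k * c' k)
        (Matrix.of fun i j => c i * r' j + (M * M') i j) := by
  refine Matrix.ext fun i j => ?_
  refine Fin.cases ?_ (fun i' => ?_) i <;> refine Fin.cases ?_ (fun j' => ?_) j <;>
    simp [Matrix.mul_apply, Fin.sum_univ_succ]

lemma blk_conjT : (blk a r c M)ᴴ = blk (star a) (fun j => star (c j)) (fun i => star (r i)) Mᴴ := by
  refine Matrix.ext fun i j => ?_
  refine Fin.cases ?_ (fun i' => ?_) i <;> refine Fin.cases ?_ (fun j' => ?_) j <;>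
    simp [Matrix.conjTranspose_apply]

lemma blk_one : blk 1 0 0 (1 : Matrix (Fin n) (Fin n) ℍ[ℝ]) = 1 := by
  refine Matrix.ext fun i j => ?_
  refine Fin.cases ?_ (fun i' => ?_) i <;> refine Fin.cases ?_ (fun j' => ?_) j <;>
    simp [Matrix.one_apply, Fin.succ_ne_zero, (Fin.succ_ne_zero _).symm, Fin.succ_inj]


/-- Quaternionic Schur triangularization. -/
theorem quaternion_schur {n : ℕ} (A : Matrix (Fin n) (Fin n) ℍ[ℝ]) :
    ∃ U T : Matrix (Fin n) (Fin n) ℍ[ℝ],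
      Uᴴ * U = 1 ∧ U * Uᴴ = 1 ∧ T = Uᴴ * A * U ∧
      (∀ i j : Fin n, j < i → T i j = 0) ∧
      (∀ i : Fin n, ∃ μ : ℂ, 0 ≤ μ.im ∧ T i i = toQ μ) := by

  induction n with
  | zero =>
    exact ⟨1, A, by simp, by simp, by simp, fun i j _ => i.elim0, fun i => i.elim0⟩
  | succ n ih =>
    obtain ⟨μ, x, him, hx1, hmv⟩ := exists_unit_eig A
    obtain ⟨U₀, hU1, hU2, hUcol⟩ := exists_unitary_col x hx1
    set B := U₀ᴴ * A * U₀ with hB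
    have hcol : ∀ i, B i 0 = (1 : Matrix (Fin (n+1)) (Fin (n+1)) ℍ[ℝ]) i 0 * toQ μ := by
      intro i
      have e1 : B i 0 = ((U₀ᴴ * A).mulVec fun k => U₀ k 0) i := by
        rw [hB, Matrix.mul_apply]; rfl
      rw [e1, show (fun k => U₀ k 0) = x from funext hUcol, ← Matrix.mulVec_mulVec, hmv]
      have e2 : (U₀ᴴ.mulVec fun k => x k * toQ μ) i = (∑ k, U₀ᴴ i k * x k) * toQ μ := by
        simp [Matrix.mulVec, dotProduct, Finset.sum_mul, mul_assoc]
      rw [e2, show (∑ k, U₀ᴴ i k * x k) = (U₀ᴴ * U₀) i 0 by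
        rw [Matrix.mul_apply]
        exact Finset.sum_congr rfl fun k _ => by rw [hUcol k], hU1]
    set A' := B.submatrix Fin.succ Fin.succ with hA'
    obtain ⟨U', T', hu1, hu2, hT', htri, hdiag⟩ := ih A'
    set V : Matrix (Fin (n+1)) (Fin (n+1)) ℍ[ℝ] := blk 1 0 0 U' with hV
    have hVH : Vᴴ = blk 1 0 0 U'ᴴ := by
      rw [hV, blk_conjT]
      simp only [Pi.zero_apply, star_zero, star_one]
      rfl
    have hVV : Vᴴ * V = 1 := by
      rw [hVH, hV, blk_mul]
      simp [hu1]
      exact blk_one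
    have hVV2 : V * Vᴴ = 1 := by
      rw [hVH, hV, blk_mul]
      simp [hu2]
      exact blk_one
    have hc0 : B 0 0 = toQ μ := by rw [hcol 0, Matrix.one_apply_eq, one_mul]
    have hcs : (fun i => B i.succ 0) = (0 : Fin n → ℍ[ℝ]) := funext fun i => by
      rw [hcol i.succ, Matrix.one_apply_ne (Fin.succ_ne_zero i), zero_mul]
      rfl
    have hBblk : B = blk (toQ μ) (fun j => B 0 j.succ) 0 A' := by
      conv_lhs => rw [blk_eq B]
      rw [hc0, hcs]
    refine ⟨U₀ * V, blk (toQ μ) (fun j => ∑ k, B 0 k.succ * U' k j) 0 T', ?_, ?_, ?_, ?_, ?_⟩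
    · rw [Matrix.conjTranspose_mul, mul_assoc, ← mul_assoc U₀ᴴ U₀ V, hU1, one_mul, hVV]
    · rw [Matrix.conjTranspose_mul, mul_assoc, ← mul_assoc V Vᴴ U₀ᴴ, hVV2, one_mul, hU2]
    · have e3 : (U₀ * V)ᴴ * A * (U₀ * V) = Vᴴ * B * V := by
        rw [hB, Matrix.conjTranspose_mul]
        simp only [Matrix.mul_assoc]
      rw [e3, hBblk, hVH, hV, blk_mul, blk_mul]
      refine Matrix.ext fun i j => ?_
      rcases Fin.eq_zero_or_eq_succ i with rfl | ⟨i', rfl⟩ <;>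
        rcases Fin.eq_zero_or_eq_succ j with rfl | ⟨j', rfl⟩ <;>
        simp [hT'] <;> rfl
    · intro i j hij
      rcases Fin.eq_zero_or_eq_succ i with rfl | ⟨i', rfl⟩
      · exact absurd hij (Fin.not_lt_zero _)
      · rcases Fin.eq_zero_or_eq_succ j with rfl | ⟨j', rfl⟩
        · rw [blks0]; rfl
        · rw [blkss]
          exact htri i' j' (Fin.succ_lt_succ_iff.mp hij)
    · intro i
      refine Fin.cases ?_ (fun i' => ?_) i
      · exact ⟨μ, him, by simp⟩
      · obtain ⟨ν, hν, hT⟩ := hdiag i'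
        exact ⟨ν, hν, by simpa using hT⟩
end
end

section
/- Let A ∈ ℍ^{n×n} and q a right eigenvalue with similarity class [q]. The [q]-eigenspace V_{[q]} := Σ_{q̃ ∈ [q]} V_{q̃} (the set of finite sums of eigenvectors for eigenvalues similar to q) is a right ℍ-subspace of ℍⁿ, and for each q̃ ∈ [q] there exists a basis of V_{[q]} (as a right ℍ-vector space) all of whose elements lie in V_{q̃}. -/
open Quaternion Matrix

noncomputable section

/-! ### Auxiliary lemmas -/

lemma piFinite {n : ℕ} : Module.Finite ℍ[ℝ]ᵐᵒᵖ (Fin n → ℍ[ℝ]) := by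
  rw [Module.finite_def, Submodule.fg_def]
  refine ⟨Set.range (fun i : Fin n => Pi.single i (1:ℍ[ℝ])), Set.finite_range _,
    le_antisymm le_top ?_⟩
  intro x _
  have hx : x = ∑ i, MulOpposite.op (x i) • Pi.single i (1:ℍ[ℝ]) := by
    funext j
    simp [Finset.sum_apply, Pi.single_apply, MulOpposite.smul_eq_mul_unop]
  rw [hx]
  exact Submodule.sum_mem _ fun i _ => Submodule.smul_mem _ _
    (Submodule.subset_span ⟨i, rfl⟩)

lemma eig_smul {n : ℕ} (A : Matrix (Fin n) (Fin n) ℍ[ℝ]) {p : ℍ[ℝ]} {x : Fin n → ℍ[ℝ]}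
    (hx : x ∈ eigSet A p) (h : ℍ[ℝ]) (hh : h ≠ 0) :
    MulOpposite.op h • x ∈ eigSet A (h⁻¹ * p * h) := by
  have hx' : ∀ i, A.mulVec x i = x i * p := fun i => congrFun hx i
  funext i
  have : A.mulVec (MulOpposite.op h • x) i = A.mulVec x i * h := by
    simp only [Matrix.mulVec, dotProduct, Pi.smul_apply, MulOpposite.smul_eq_mul_unop,
      MulOpposite.unop_op, Finset.sum_mul, mul_assoc]
  rw [this, hx' i]
  show x i * p * h = x i * h * (h⁻¹ * p * h)
  rw [mul_assoc (x i) h, ← mul_assoc h (h⁻¹ * p) h, ← mul_assoc h h⁻¹ p,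
    mul_inv_cancel₀ hh, one_mul, ← mul_assoc]

lemma conj_conj (g h q : ℍ[ℝ]) (hg : g ≠ 0) (hh : h ≠ 0) :
    (g⁻¹ * h)⁻¹ * (g⁻¹ * q * g) * (g⁻¹ * h) = h⁻¹ * q * h := by
  simp [_root_.mul_inv_rev, mul_assoc, mul_inv_cancel_left₀, inv_mul_cancel_left₀, hg, hh]

/-- V_{[q]} (the set of finite sums of eigenvectors for eigenvalues similar to q) is a
right ℍ-subspace of ℍⁿ, and for every q̃ ∈ [q] it admits a basis consisting of
q̃-eigenvectors. -/
theorem Vclass_subspace_and_basis {n : ℕ} (A : Matrix (Fin n) (Fin n) ℍ[ℝ])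
    (q : ℍ[ℝ]) (hq : RightEig A q) :
    (∃ W : Submodule ℍ[ℝ]ᵐᵒᵖ (Fin n → ℍ[ℝ]),
      (W : Set (Fin n → ℍ[ℝ])) =
        (AddSubmonoid.closure (⋃ q' ∈ {p | qSimilar p q}, eigSet A q') :
          AddSubmonoid (Fin n → ℍ[ℝ]))) ∧
    (∀ qt : ℍ[ℝ], qSimilar qt q →
      ∃ (d : ℕ) (v : Fin d → (Fin n → ℍ[ℝ])),
        (∀ i, v i ∈ eigSet A qt) ∧ LinearIndependent ℍ[ℝ]ᵐᵒᵖ v ∧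
        Submodule.span ℍ[ℝ]ᵐᵒᵖ (Set.range v) = Vclass A q) := by
  set S : Set (Fin n → ℍ[ℝ]) := ⋃ q' ∈ {p | qSimilar p q}, eigSet A q' with hS
  -- S is closed under (nonzero) right scalar multiplication
  have hSmem : ∀ (h : ℍ[ℝ]), h ≠ 0 → ∀ x ∈ S, MulOpposite.op h • x ∈ S := by
    intro h hh x hx
    rw [hS, Set.mem_iUnion₂] at hx ⊢
    obtain ⟨q', ⟨g, hg, hgq⟩, hx⟩ := hx
    refine ⟨h⁻¹ * q' * h, ⟨g * h, mul_ne_zero hg hh, ?_⟩, eig_smul A hx h hh⟩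
    rw [hgq, _root_.mul_inv_rev]
    simp [mul_assoc]
  constructor
  · -- Part 1: the additive closure of S is a submodule
    have hsmulcl : ∀ (c : ℍ[ℝ]ᵐᵒᵖ) (x : Fin n → ℍ[ℝ]), x ∈ AddSubmonoid.closure S →
        c • x ∈ AddSubmonoid.closure S := by
      intro c x hx
      induction hx using AddSubmonoid.closure_induction with
      | mem y hy =>
        by_cases hc : c.unop = 0
        · have : c • y = 0 := by
            funext i
            simp [MulOpposite.smul_eq_mul_unop, hc]
          rw [this]; exact zero_mem _
        · have : c • y = MulOpposite.op c.unop • y := by rw [MulOpposite.op_unop]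
          rw [this]
          exact AddSubmonoid.subset_closure (hSmem c.unop hc y hy)
      | zero => rw [smul_zero]; exact zero_mem _
      | add a b _ _ ha hb => rw [smul_add]; exact add_mem ha hb
    exact ⟨{ toAddSubmonoid := AddSubmonoid.closure S,
             smul_mem' := fun c x hx => hsmulcl c x hx }, rfl⟩
  · -- Part 2: basis of qt-eigenvectors
    intro qt hqt
    obtain ⟨h, hh, hqth⟩ := hqt
    have hspan : Submodule.span ℍ[ℝ]ᵐᵒᵖ (eigSet A qt) = Vclass A q := by
      apply le_antisymm
      · apply Submodule.span_mono
        intro x hx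
        exact Set.mem_iUnion₂.2 ⟨qt, ⟨h, hh, hqth⟩, hx⟩
      · rw [Vclass]
        apply Submodule.span_le.2
        intro x hx
        rw [Set.mem_iUnion₂] at hx
        obtain ⟨q', ⟨g, hg, hq'⟩, hx⟩ := hx
        set k : ℍ[ℝ] := g⁻¹ * h with hk
        have hkne : k ≠ 0 := mul_ne_zero (inv_ne_zero hg) hh
        have h1 : MulOpposite.op k • x ∈ eigSet A qt := by
          have := eig_smul A hx k hkne
          rwa [hk, hq', conj_conj g h q hg hh, ← hqth] at this
        have h2 : x = MulOpposite.op k⁻¹ • (MulOpposite.op k • x) := by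
          funext i
          simp [MulOpposite.smul_eq_mul_unop, mul_assoc, mul_inv_cancel₀ hkne]
        rw [h2]
        exact Submodule.smul_mem _ _ (Submodule.subset_span h1)
    obtain ⟨b, hbsub, hbspan, hbli⟩ := exists_linearIndependent ℍ[ℝ]ᵐᵒᵖ (eigSet A qt)
    haveI : Module.Finite ℍ[ℝ]ᵐᵒᵖ (Fin n → ℍ[ℝ]) := piFinite
    have hbfin : b.Finite := hbli.setFinite
    haveI := hbfin.fintype
    refine ⟨Fintype.card b, fun i => ((Fintype.equivFin b).symm i : Fin n → ℍ[ℝ]),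
      fun i => hbsub ((Fintype.equivFin b).symm i).2, ?_, ?_⟩
    · exact hbli.comp (Fintype.equivFin b).symm (Equiv.injective _)
    · have hrange : Set.range (fun i => (((Fintype.equivFin b).symm i : b) : Fin n → ℍ[ℝ])) = b := by
        rw [show (fun i => (((Fintype.equivFin ↑b).symm i : b) : Fin n → ℍ[ℝ])) =
          Subtype.val ∘ (Fintype.equivFin ↑b).symm from rfl, Set.range_comp]
        simp
      rw [hrange, hbspan, hspan]
end
end
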